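/- Let L ≥ 2 be even and let A = {1, L}. Write n = (L+1)k + i with 0 ≤ i ≤ L. Then: if i < L and W_A(n) = I, then fI(n) = Lk + ⌈i/2⌉; if i < L and W_A(n) = II, then fII(n) = Lk + ⌈i/2⌉; and if i = L, then W_A(n) = I and fI(n) = L(k+1). -/

import Mathlib

/-- Standard NIM winner for the one-pile subtraction game with move set `A`:
`nimW A n = true` means Player I (the player to move) wins with `n` stones;
`nimW A n = false` means Player II wins.  (For `A` consisting of positive
integers this is exactly: Player I wins iff some `a ∈ A` with `a ≤ n` moves to
a Player-II-win position `n - a`.) -/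
def nimW (A : Finset ℕ) : ℕ → Bool
  | n =>
    decide (((A.filter fun a => 0 < a ∧ a ≤ n).attach.filter (fun a =>
      nimW A (n - a.1) = false)).Nonempty)
decreasing_by
  all_goals
    have h := a.2
    simp only [Finset.mem_filter] at h
    omega

/-- `fpair A n = (fI A n, fII A n)`, defined by simultaneous recursion:
for `n < min A` both are `0`; otherwise `fII n = max { fI (n-a) : a ∈ A, a ≤ n }`
(so in particular `fII n = 0` when there is no legal move), and
`fI n = min { fII (n-a) + a : a ∈ A, a ≤ n, nimW A (n-a) = false }` if `nimW A n`,
while `fI n = min { fII (n-a) + a : a ∈ A, a ≤ n, fI (n-a) = fII n }` otherwise. -/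
def fpair (A : Finset ℕ) : ℕ → ℕ × ℕ
  | n =>
    let opts := (A.filter fun a => 0 < a ∧ a ≤ n).attach
    let fIIn := (opts.image fun a => (fpair A (n - a.1)).1).max.unbotD 0
    (if nimW A n then
        ((opts.filter fun a => nimW A (n - a.1) = false).image
          fun a => (fpair A (n - a.1)).2 + a.1).min.untopD 0
      else
        ((opts.filter fun a => (fpair A (n - a.1)).1 = fIIn).image
          fun a => (fpair A (n - a.1)).2 + a.1).min.untopD 0,
     fIIn)
decreasing_by
  all_goals
    have h := a.2
    simp only [Finset.mem_filter] at h
    omega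

/-- `fI A n`: the least amount of money the player to move needs to win
(richness threshold for Player I), as defined in the paper. -/
def fI (A : Finset ℕ) (n : ℕ) : ℕ := (fpair A n).1

/-- `fII A n`: the richness threshold for the player not moving (Player II). -/
def fII (A : Finset ℕ) (n : ℕ) : ℕ := (fpair A n).2


namespace NimAux

lemma nimW_step (L n : ℕ) (hL : 2 ≤ L) : nimW {1,L} n =
    if n = 0 then false else if n < L then !nimW {1,L} (n-1)
    else (!nimW {1,L} (n-1) || !nimW {1,L} (n-L)) := by
  have dec : ∀ (P : Prop) [Decidable P] (b : Bool), (P ↔ b = true) → decide P = b := by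
    intro P _ b h
    cases b <;> simp_all
  rw [nimW]
  apply dec
  simp only [Finset.filter_nonempty_iff, Finset.mem_attach, true_and, Subtype.exists,
    Finset.mem_filter, Finset.mem_insert, Finset.mem_singleton]
  split_ifs with h0 h1
  · simp [h0]
  · have key : (∃ a, ∃ _ : (a = 1 ∨ a = L) ∧ (0 < a ∧ a ≤ n), nimW {1,L} (n-a) = false) ↔
        nimW {1,L} (n-1) = false := by
      constructor
      · rintro ⟨a, ⟨h1 | h2, hp, hle⟩, hw⟩
        · exact h1 ▸ hw
        · omega
      · intro h; exact ⟨1, ⟨Or.inl rfl, one_pos, by omega⟩, h⟩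
    simp only [key]
    cases nimW {1,L} (n-1) <;> simp
  · have key : (∃ a, ∃ _ : (a = 1 ∨ a = L) ∧ (0 < a ∧ a ≤ n), nimW {1,L} (n-a) = false) ↔
        (nimW {1,L} (n-1) = false ∨ nimW {1,L} (n-L) = false) := by
      constructor
      · rintro ⟨a, ⟨h1 | h2, hp, hle⟩, hw⟩
        · exact Or.inl (h1 ▸ hw)
        · exact Or.inr (h2 ▸ hw)
      · rintro (h | h)
        · exact ⟨1, ⟨Or.inl rfl, one_pos, by omega⟩, h⟩
        · exact ⟨L, ⟨Or.inr rfl, by omega, by omega⟩, h⟩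
    simp only [key]
    cases nimW {1,L} (n-1) <;> cases nimW {1,L} (n-L) <;> simp

lemma min_untop'_eq {t : Finset ℕ} {m : ℕ} (h1 : m ∈ t) (h2 : ∀ x ∈ t, m ≤ x) :
    t.min.untopD 0 = m := by
  have hm : t.min = (m : WithTop ℕ) :=
    le_antisymm (Finset.min_le h1) (Finset.le_min fun b hb => WithTop.coe_le_coe.mpr (h2 b hb))
  rw [hm]; rfl

lemma max_unbot'_eq {t : Finset ℕ} {m : ℕ} (h1 : m ∈ t) (h2 : ∀ x ∈ t, x ≤ m) :
    t.max.unbotD 0 = m := by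
  have hm : t.max = (m : WithBot ℕ) :=
    le_antisymm (Finset.max_le fun b hb => WithBot.coe_le_coe.mpr (h2 b hb)) (Finset.le_max h1)
  rw [hm]; rfl

lemma min_filter {s : Finset ℕ} (Q : {x // x ∈ s} → Prop) [DecidablePred Q]
    (F : {x // x ∈ s} → ℕ) (m : ℕ)
    (h1 : ∃ a, Q a ∧ F a = m) (h2 : ∀ a, Q a → m ≤ F a) :
    ((s.attach.filter Q).image F).min.untopD 0 = m := by
  apply min_untop'_eq
  · obtain ⟨a, hq, hf⟩ := h1
    exact Finset.mem_image.mpr ⟨a, Finset.mem_filter.mpr ⟨Finset.mem_attach _ _, hq⟩, hf⟩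
  · intro x hx
    obtain ⟨a, ha, hf⟩ := Finset.mem_image.mp hx
    rw [← hf]
    exact h2 a (Finset.mem_filter.mp ha).2

lemma max_att {s : Finset ℕ} (F : {x // x ∈ s} → ℕ) (m : ℕ)
    (h1 : ∃ a, F a = m) (h2 : ∀ a, F a ≤ m) :
    ((s.attach.image F).max).unbotD 0 = m := by
  apply max_unbot'_eq
  · obtain ⟨a, hf⟩ := h1
    exact Finset.mem_image.mpr ⟨a, Finset.mem_attach _ _, hf⟩
  · intro x hx
    obtain ⟨a, _, hf⟩ := Finset.mem_image.mp hx
    rw [← hf]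
    exact h2 a

/-- membership in the legal-move set -/
lemma mem_moves {L n a : ℕ} (h : a ∈ ({1,L} : Finset ℕ).filter (fun a => 0 < a ∧ a ≤ n)) :
    (a = 1 ∨ a = L) ∧ 0 < a ∧ a ≤ n := by
  simpa only [Finset.mem_filter, Finset.mem_insert, Finset.mem_singleton] using h

lemma one_mem_moves {L n : ℕ} (h : 1 ≤ n) :
    (1 : ℕ) ∈ ({1,L} : Finset ℕ).filter (fun a => 0 < a ∧ a ≤ n) := by
  simp only [Finset.mem_filter, Finset.mem_insert, Finset.mem_singleton]
  exact ⟨by simp, by omega, by omega⟩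

lemma L_mem_moves {L n : ℕ} (hL : 2 ≤ L) (h : L ≤ n) :
    L ∈ ({1,L} : Finset ℕ).filter (fun a => 0 < a ∧ a ≤ n) := by
  simp only [Finset.mem_filter, Finset.mem_insert, Finset.mem_singleton]
  exact ⟨by simp, by omega, by omega⟩

lemma fpair_zero (L : ℕ) : fpair {1,L} 0 = (0, 0) := by
  have hs : ({1,L} : Finset ℕ).filter (fun a => 0 < a ∧ a ≤ 0) = ∅ :=
    Finset.filter_false_of_mem (fun a _ => by omega)
  have hatt : (({1,L} : Finset ℕ).filter (fun a => 0 < a ∧ a ≤ 0)).attach = ∅ :=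
    Finset.attach_eq_empty_iff.mpr hs
  rw [fpair, hatt]
  simp

lemma fII_small (L n : ℕ) (h1 : 1 ≤ n) (h2 : n < L) : fII {1,L} n = fI {1,L} (n-1) := by
  rw [fII, fpair]
  refine max_att _ _ ⟨⟨1, one_mem_moves h1⟩, rfl⟩ ?_
  rintro ⟨a, ha⟩
  obtain ⟨h | h, hp, hle⟩ := mem_moves ha
  · subst a; exact le_refl _
  · omega

lemma fII_big (L n : ℕ) (hL : 2 ≤ L) (hn : L ≤ n) :
    fII {1,L} n = max (fI {1,L} (n-1)) (fI {1,L} (n-L)) := by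
  rw [fII, fpair]
  refine max_att _ _ ?_ ?_
  · rcases le_total (fI {1,L} (n-1)) (fI {1,L} (n-L)) with h | h
    · exact ⟨⟨L, L_mem_moves hL hn⟩, by rw [max_eq_right h]; rfl⟩
    · exact ⟨⟨1, one_mem_moves (by omega)⟩, by rw [max_eq_left h]; rfl⟩
  · rintro ⟨a, ha⟩
    obtain ⟨h | h, hp, hle⟩ := mem_moves ha
    · subst a; exact le_max_left _ _
    · subst a; exact le_max_right _ _

lemma fI_small (L n : ℕ) (hL : 2 ≤ L) (h1 : 1 ≤ n) (h2 : n < L) :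
    fI {1,L} n = fII {1,L} (n-1) + 1 := by
  have hstep := nimW_step L n hL
  rw [if_neg (by omega : ¬ n = 0), if_pos h2] at hstep
  have hT := fII_small L n h1 h2
  rw [fII, fpair] at hT
  rw [fI, fpair]
  split_ifs with hw
  · have hf : nimW {1,L} (n-1) = false := by
      cases h : nimW {1,L} (n-1) <;> simp_all
    refine min_filter _ _ _ ⟨⟨1, one_mem_moves h1⟩, hf, rfl⟩ ?_
    rintro ⟨a, ha⟩ hq
    obtain ⟨h | h, hp, hle⟩ := mem_moves ha
    · subst a; exact le_refl _
    · omega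
  · refine min_filter _ _ _ ⟨⟨1, one_mem_moves h1⟩, hT.symm, rfl⟩ ?_
    rintro ⟨a, ha⟩ hq
    obtain ⟨h | h, hp, hle⟩ := mem_moves ha
    · subst a; exact le_refl _
    · omega

lemma fI_big_I_L (L n : ℕ) (hL : 2 ≤ L) (hn : L ≤ n)
    (h1 : nimW {1,L} (n-1) = true) (h2 : nimW {1,L} (n-L) = false) :
    fI {1,L} n = fII {1,L} (n-L) + L := by
  have hstep := nimW_step L n hL
  rw [if_neg (by omega : ¬ n = 0), if_neg (by omega : ¬ n < L), h1, h2] at hstep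
  rw [fI, fpair, if_pos (by simp [hstep])]
  refine min_filter _ _ _ ⟨⟨L, L_mem_moves hL hn⟩, h2, rfl⟩ ?_
  rintro ⟨a, ha⟩ hq
  obtain ⟨h | h, hp, hle⟩ := mem_moves ha
  · subst a
    exact absurd hq (by simp [h1])
  · subst a; exact le_refl _

lemma fI_big_I_ft (L n : ℕ) (hL : 2 ≤ L) (hn : L ≤ n)
    (h1 : nimW {1,L} (n-1) = false) (h2 : nimW {1,L} (n-L) = true) :
    fI {1,L} n = fII {1,L} (n-1) + 1 := by
  have hstep := nimW_step L n hL
  rw [if_neg (by omega : ¬ n = 0), if_neg (by omega : ¬ n < L), h1, h2] at hstep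
  rw [fI, fpair, if_pos (by simp [hstep])]
  refine min_filter _ _ _ ⟨⟨1, one_mem_moves (by omega)⟩, h1, rfl⟩ ?_
  rintro ⟨a, ha⟩ hq
  obtain ⟨h | h, hp, hle⟩ := mem_moves ha
  · subst a; exact le_refl _
  · subst a
    exact absurd hq (by simp [h2])

lemma fI_big_I_ff (L n : ℕ) (hL : 2 ≤ L) (hn : L ≤ n)
    (h1 : nimW {1,L} (n-1) = false) (h2 : nimW {1,L} (n-L) = false) :
    fI {1,L} n = min (fII {1,L} (n-1) + 1) (fII {1,L} (n-L) + L) := by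
  have hstep := nimW_step L n hL
  rw [if_neg (by omega : ¬ n = 0), if_neg (by omega : ¬ n < L), h1, h2] at hstep
  rw [fI, fpair, if_pos (by simp [hstep])]
  refine min_filter _ _ _ ?_ ?_
  · rcases le_total (fII {1,L} (n-1) + 1) (fII {1,L} (n-L) + L) with h | h
    · exact ⟨⟨1, one_mem_moves (by omega)⟩, h1, by rw [min_eq_left h]; rfl⟩
    · exact ⟨⟨L, L_mem_moves hL hn⟩, h2, by rw [min_eq_right h]; rfl⟩
  · rintro ⟨a, ha⟩ hq
    obtain ⟨h | h, hp, hle⟩ := mem_moves ha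
    · subst a; exact min_le_left _ _
    · subst a; exact min_le_right _ _

lemma fI_big_II (L n : ℕ) (hL : 2 ≤ L) (hn : L ≤ n) (hw : nimW {1,L} n = false)
    (hlt : fI {1,L} (n-L) < fI {1,L} (n-1)) :
    fI {1,L} n = fII {1,L} (n-1) + 1 := by
  have hT := fII_big L n hL hn
  rw [fII, fpair] at hT
  have hmax : max (fI {1,L} (n-1)) (fI {1,L} (n-L)) = fI {1,L} (n-1) :=
    max_eq_left (le_of_lt hlt)
  rw [fI, fpair, if_neg (by simp [hw])]
  refine min_filter _ _ _ ⟨⟨1, one_mem_moves (by omega)⟩, hmax.symm.trans hT.symm, rfl⟩ ?_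
  rintro ⟨a, ha⟩ hq
  obtain ⟨h | h, hp, hle⟩ := mem_moves ha
  · subst a; exact le_refl _
  · subst a
    have hcon : fI {1,L} (n-L) = fI {1,L} (n-1) := (hq.trans hT).trans hmax
    omega

/-- closed form for `fI`. -/
def FF (L k i : ℕ) : ℕ :=
  if i = L then L*(k+1)
  else if i % 2 = 1 then L*k+(i+1)/2
  else if k = 0 then i/2
  else L*k + i/2 + 1 - L/2

/-- closed form for `fII`. -/
def GG (L k i : ℕ) : ℕ :=
  if i = L then L*k + L/2
  else if i % 2 = 0 then L*k + i/2
  else if k = 0 then i/2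
  else L*k + (i+1)/2 - L/2

lemma FF_L (L k : ℕ) : FF L k L = L*(k+1) := by rw [FF, if_pos rfl]
lemma FF_odd (L k i : ℕ) (h1 : i % 2 = 1) (h2 : ¬ i = L) :
    FF L k i = L*k+(i+1)/2 := by rw [FF, if_neg h2, if_pos h1]
lemma FF_even0 (L k i : ℕ) (h1 : ¬ i % 2 = 1) (h2 : ¬ i = L) (h3 : k = 0) :
    FF L k i = i/2 := by rw [FF, if_neg h2, if_neg h1, if_pos h3]
lemma FF_even (L k i : ℕ) (h1 : ¬ i % 2 = 1) (h2 : ¬ i = L) (h3 : ¬ k = 0) :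
    FF L k i = L*k + i/2 + 1 - L/2 := by rw [FF, if_neg h2, if_neg h1, if_neg h3]
lemma GG_L (L k : ℕ) : GG L k L = L*k + L/2 := by rw [GG, if_pos rfl]
lemma GG_even (L k i : ℕ) (h1 : i % 2 = 0) (h2 : ¬ i = L) :
    GG L k i = L*k + i/2 := by rw [GG, if_neg h2, if_pos h1]
lemma GG_odd0 (L k i : ℕ) (h1 : ¬ i % 2 = 0) (h2 : ¬ i = L) (h3 : k = 0) :
    GG L k i = i/2 := by rw [GG, if_neg h2, if_neg h1, if_pos h3]
lemma GG_odd (L k i : ℕ) (h1 : ¬ i % 2 = 0) (h2 : ¬ i = L) (h3 : ¬ k = 0) :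
    GG L k i = L*k + (i+1)/2 - L/2 := by rw [GG, if_neg h2, if_neg h1, if_neg h3]

set_option maxHeartbeats 1600000 in
lemma key (L : ℕ) (hL : 2 ≤ L) (hLeven : Even L) :
    ∀ n k i, i ≤ L → n = (L+1)*k + i →
      nimW ({1,L} : Finset ℕ) n = decide (i % 2 = 1 ∨ i = L) ∧
      fI ({1,L} : Finset ℕ) n = FF L k i ∧ fII ({1,L} : Finset ℕ) n = GG L k i := by
  have hL2 : L % 2 = 0 := Nat.even_iff.mp hLeven
  intro n
  induction n using Nat.strong_induction_on with
  | _ n IH =>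
  intro k i hi hn
  by_cases hiL : i = L
  · -- i = L : n = (L+1)k + L ≥ L
    rw [hiL] at hn ⊢
    have eL : L*(k+1) = L*k + L := by ring
    have hnL : L ≤ n := by omega
    have e1 : n - 1 = (L+1)*k + (L-1) := by omega
    have e2 : n - L = (L+1)*k + 0 := by omega
    obtain ⟨hW1, hF1, hG1⟩ := IH (n-1) (by omega) k (L-1) (by omega) e1
    obtain ⟨hW0, hF0, hG0⟩ := IH (n-L) (by omega) k 0 (by omega) e2
    have hW1' : nimW {1,L} (n-1) = true := by
      rw [hW1, decide_eq_true_eq]; omega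
    have hW0' : nimW {1,L} (n-L) = false := by
      rw [hW0, decide_eq_false_iff_not]; omega
    refine ⟨?_, ?_, ?_⟩
    · rw [nimW_step L n hL, if_neg (by omega), if_neg (by omega), hW1', hW0']
      simp
    · rw [fI_big_I_L L n hL hnL hW1' hW0', hG0,
        GG_even L k 0 (by omega) (by omega), FF_L]
      omega
    · rw [fII_big L n hL hnL, hF1, hF0, GG_L,
        FF_odd L k (L-1) (by omega) (by omega)]
      by_cases hk : k = 0
      · rw [FF_even0 L k 0 (by omega) (by omega) hk]
        omega
      · rw [FF_even L k 0 (by omega) (by omega) hk]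
        omega
  · by_cases hk0 : k = 0
    · -- k = 0, i < L : n = i
      subst hk0
      simp only [Nat.mul_zero, Nat.zero_add] at hn
      subst n
      by_cases hi0 : i = 0
      · subst hi0
        refine ⟨?_, ?_, ?_⟩
        · rw [nimW_step L 0 hL, if_pos rfl, eq_comm, decide_eq_false_iff_not]
          omega
        · rw [fI, fpair_zero]
          show (0:ℕ) = FF L 0 0
          rw [FF_even0 L 0 0 (by omega) (by omega) rfl]
        · rw [fII, fpair_zero]
          show (0:ℕ) = GG L 0 0
          rw [GG_even L 0 0 (by omega) (by omega)]
          omega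
      · -- 1 ≤ i < L
        obtain ⟨hW, hF, hG⟩ := IH (i-1) (by omega) 0 (i-1) (by omega) (by omega)
        rcases Nat.even_or_odd i with he | ho
        · rw [Nat.even_iff] at he
          refine ⟨?_, ?_, ?_⟩
          · rw [nimW_step L i hL, if_neg (by omega), if_pos (by omega), hW,
              show decide ((i-1) % 2 = 1 ∨ i-1 = L) = true from by
                rw [decide_eq_true_eq]; omega,
              show decide (i % 2 = 1 ∨ i = L) = false from by
                rw [decide_eq_false_iff_not]; omega]
            rfl
          · rw [fI_small L i hL (by omega) (by omega), hG,
              GG_odd0 L 0 (i-1) (by omega) (by omega) rfl,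
              FF_even0 L 0 i (by omega) (by omega) rfl]
            omega
          · rw [fII_small L i (by omega) (by omega), hF,
              FF_odd L 0 (i-1) (by omega) (by omega),
              GG_even L 0 i (by omega) (by omega)]
            omega
        · rw [Nat.odd_iff] at ho
          refine ⟨?_, ?_, ?_⟩
          · rw [nimW_step L i hL, if_neg (by omega), if_pos (by omega), hW,
              show decide ((i-1) % 2 = 1 ∨ i-1 = L) = false from by
                rw [decide_eq_false_iff_not]; omega,
              show decide (i % 2 = 1 ∨ i = L) = true from by
                rw [decide_eq_true_eq]; omega]
            rfl
          · rw [fI_small L i hL (by omega) (by omega), hG,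
              GG_even L 0 (i-1) (by omega) (by omega),
              FF_odd L 0 i (by omega) (by omega)]
            omega
          · rw [fII_small L i (by omega) (by omega), hF,
              FF_even0 L 0 (i-1) (by omega) (by omega) rfl,
              GG_odd0 L 0 i (by omega) (by omega) rfl]
            omega
    · -- k ≥ 1, i < L
      obtain ⟨k', rfl⟩ : ∃ k', k = k'+1 := ⟨k-1, by omega⟩
      have e : (L+1)*(k'+1) = (L+1)*k' + (L+1) := by ring
      have eL : L*(k'+1) = L*k' + L := by ring
      have hnL : L ≤ n := by omega
      have hnd : n - L = (L+1)*k' + (i+1) := by omega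
      obtain ⟨hWL, hFL, hGL⟩ := IH (n-L) (by omega) k' (i+1) (by omega) hnd
      rcases Nat.even_or_odd i with he | ho
      · -- i even (so i ≤ L-2, i+1 odd < L)
        rw [Nat.even_iff] at he
        have hWL' : nimW {1,L} (n-L) = true := by
          rw [hWL, decide_eq_true_eq]; omega
        by_cases hi0 : i = 0
        · subst hi0
          have hd1 : n - 1 = (L+1)*k' + L := by omega
          obtain ⟨hW1, hF1, hG1⟩ := IH (n-1) (by omega) k' L (le_refl L) hd1
          have hW1' : nimW {1,L} (n-1) = true := by
            rw [hW1, decide_eq_true_eq]; omega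
          have hwn : nimW {1,L} n = false := by
            rw [nimW_step L n hL, if_neg (by omega), if_neg (by omega), hW1', hWL']
            rfl
          refine ⟨?_, ?_, ?_⟩
          · rw [hwn, eq_comm, decide_eq_false_iff_not]
            omega
          · have hlt : fI {1,L} (n-L) < fI {1,L} (n-1) := by
              rw [hFL, hF1, FF_odd L k' 1 (by omega) (by omega), FF_L]
              omega
            rw [fI_big_II L n hL hnL hwn hlt, hG1, GG_L,
              FF_even L (k'+1) 0 (by omega) (by omega) (by omega)]
            omega
          · rw [fII_big L n hL hnL, hF1, hFL, FF_L,
              FF_odd L k' 1 (by omega) (by omega),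
              GG_even L (k'+1) 0 (by omega) (by omega)]
            omega
        · have hd1 : n - 1 = (L+1)*(k'+1) + (i-1) := by omega
          obtain ⟨hW1, hF1, hG1⟩ := IH (n-1) (by omega) (k'+1) (i-1) (by omega) hd1
          have hW1' : nimW {1,L} (n-1) = true := by
            rw [hW1, decide_eq_true_eq]; omega
          have hwn : nimW {1,L} n = false := by
            rw [nimW_step L n hL, if_neg (by omega), if_neg (by omega), hW1', hWL']
            rfl
          refine ⟨?_, ?_, ?_⟩
          · rw [hwn, eq_comm, decide_eq_false_iff_not]
            omega
          · have hlt : fI {1,L} (n-L) < fI {1,L} (n-1) := by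
              rw [hFL, hF1, FF_odd L k' (i+1) (by omega) (by omega),
                FF_odd L (k'+1) (i-1) (by omega) (by omega)]
              omega
            rw [fI_big_II L n hL hnL hwn hlt, hG1,
              GG_odd L (k'+1) (i-1) (by omega) (by omega) (by omega),
              FF_even L (k'+1) i (by omega) (by omega) (by omega)]
            omega
          · rw [fII_big L n hL hnL, hF1, hFL,
              FF_odd L (k'+1) (i-1) (by omega) (by omega),
              FF_odd L k' (i+1) (by omega) (by omega),
              GG_even L (k'+1) i (by omega) (by omega)]
            omega
      · -- i odd (1 ≤ i ≤ L-1)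
        rw [Nat.odd_iff] at ho
        have hd1 : n - 1 = (L+1)*(k'+1) + (i-1) := by omega
        obtain ⟨hW1, hF1, hG1⟩ := IH (n-1) (by omega) (k'+1) (i-1) (by omega) hd1
        have hW1' : nimW {1,L} (n-1) = false := by
          rw [hW1, decide_eq_false_iff_not]; omega
        have hwn : nimW {1,L} n = true := by
          rw [nimW_step L n hL, if_neg (by omega), if_neg (by omega), hW1']
          rfl
        have hWgoal : nimW {1,L} n = decide (i % 2 = 1 ∨ i = L) := by
          rw [hwn, eq_comm, decide_eq_true_eq]
          omega
        by_cases hiL1 : i = L - 1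
        · have hWL' : nimW {1,L} (n-L) = true := by
            rw [hWL, decide_eq_true_eq]; omega
          refine ⟨hWgoal, ?_, ?_⟩
          · rw [fI_big_I_ft L n hL hnL hW1' hWL', hG1,
              GG_even L (k'+1) (i-1) (by omega) (by omega),
              FF_odd L (k'+1) i (by omega) (by omega)]
            omega
          · rw [fII_big L n hL hnL, hF1, hFL,
              FF_even L (k'+1) (i-1) (by omega) (by omega) (by omega),
              show i + 1 = L from by omega, FF_L,
              GG_odd L (k'+1) i (by omega) (by omega) (by omega)]
            omega
        · have hWL' : nimW {1,L} (n-L) = false := by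
            rw [hWL, decide_eq_false_iff_not]; omega
          refine ⟨hWgoal, ?_, ?_⟩
          · rw [fI_big_I_ff L n hL hnL hW1' hWL', hG1, hGL,
              GG_even L (k'+1) (i-1) (by omega) (by omega),
              GG_even L k' (i+1) (by omega) (by omega),
              FF_odd L (k'+1) i (by omega) (by omega)]
            omega
          · rw [fII_big L n hL hnL, hF1, hFL,
              FF_even L (k'+1) (i-1) (by omega) (by omega) (by omega),
              GG_odd L (k'+1) i (by omega) (by omega) (by omega)]
            by_cases hk' : k' = 0
            · rw [FF_even0 L k' (i+1) (by omega) (by omega) hk']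
              omega
            · rw [FF_even L k' (i+1) (by omega) (by omega) hk']
              omega

end NimAux

/-- For even `L ≥ 2` and `A = {1, L}`, write `n = (L+1)k + i` with
`0 ≤ i ≤ L`.  If `i < L` and Player I wins standard NIM then `fI n = Lk + ⌈i/2⌉`;
if `i < L` and Player II wins then `fII n = Lk + ⌈i/2⌉`; and if `i = L` then
Player I wins and `fI n = L(k+1)`.  (Here `⌈i/2⌉ = (i+1)/2` in `ℕ`.) -/
theorem f_one_L_formula (L : ℕ) (hL : 2 ≤ L) (hLeven : Even L)
    (n k i : ℕ) (hi : i ≤ L) (hn : n = (L + 1) * k + i) :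
    (i < L → nimW ({1, L} : Finset ℕ) n = true →
        fI ({1, L} : Finset ℕ) n = L * k + (i + 1) / 2) ∧
      (i < L → nimW ({1, L} : Finset ℕ) n = false →
        fII ({1, L} : Finset ℕ) n = L * k + (i + 1) / 2) ∧
      (i = L → nimW ({1, L} : Finset ℕ) n = true ∧
        fI ({1, L} : Finset ℕ) n = L * (k + 1)) := by
  obtain ⟨hW, hF, hG⟩ := NimAux.key L hL hLeven n k i hi hn
  refine ⟨?_, ?_, ?_⟩
  · intro hiltL hw
    have hP : i % 2 = 1 ∨ i = L := of_decide_eq_true (hW.symm.trans hw)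
    rw [hF, NimAux.FF_odd L k i (by omega) (by omega)]
  · intro hiltL hw
    have hP : ¬ (i % 2 = 1 ∨ i = L) := of_decide_eq_false (hW.symm.trans hw)
    rw [hG, NimAux.GG_even L k i (by omega) (by omega)]
    omega
  · intro hiL
    subst hiL
    constructor
    · rw [hW, decide_eq_true_eq]
      exact Or.inr rfl
    · rw [hF, NimAux.FF_L]
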